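/- The map f sending σ ∈ S_{n−1} to the permutation f(σ) ∈ S_n defined by f(σ)(i) = σ⁻¹(i)+1 for i ≤ n−1 and f(σ)(n) = 1 is a bijection from S_{n−1} onto {τ ∈ S_n : τ(n)=1}, and it preserves the number of crossings: crs(f(σ)) = crs(σ) for all σ. -/

import Mathlib

open Finset Polynomial Equiv

attribute [local instance] Classical.propDecidable

def isCrossing {n : ℕ} (σ : Equiv.Perm (Fin n)) (i j : Fin n) : Prop :=
  (i < j ∧ j < σ i ∧ σ i < σ j) ∨ (σ i < σ j ∧ σ j ≤ i ∧ i < j)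

noncomputable def crs {n : ℕ} (σ : Equiv.Perm (Fin n)) : ℕ :=
  (Finset.univ.filter (fun p : Fin n × Fin n => isCrossing σ p.1 p.2)).card

def avoids123 {n : ℕ} (σ : Equiv.Perm (Fin n)) : Prop :=
  ¬ ∃ i j k : Fin n, i < j ∧ j < k ∧ σ i < σ j ∧ σ j < σ k

def avoids132 {n : ℕ} (σ : Equiv.Perm (Fin n)) : Prop :=
  ¬ ∃ i j k : Fin n, i < j ∧ j < k ∧ σ i < σ k ∧ σ k < σ j

def avoids213 {n : ℕ} (σ : Equiv.Perm (Fin n)) : Prop :=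
  ¬ ∃ i j k : Fin n, i < j ∧ j < k ∧ σ j < σ i ∧ σ i < σ k

def avoids231 {n : ℕ} (σ : Equiv.Perm (Fin n)) : Prop :=
  ¬ ∃ i j k : Fin n, i < j ∧ j < k ∧ σ k < σ i ∧ σ i < σ j

def avoids312 {n : ℕ} (σ : Equiv.Perm (Fin n)) : Prop :=
  ¬ ∃ i j k : Fin n, i < j ∧ j < k ∧ σ j < σ k ∧ σ k < σ i

def avoids321 {n : ℕ} (σ : Equiv.Perm (Fin n)) : Prop :=
  ¬ ∃ i j k : Fin n, i < j ∧ j < k ∧ σ k < σ j ∧ σ j < σ i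

noncomputable def ut {n : ℕ} (σ : Equiv.Perm (Fin n)) : ℕ :=
  (Finset.univ.filter (fun i : Fin n => σ⁻¹ i < i ∧ i < σ i)).card

noncomputable def lt' {n : ℕ} (σ : Equiv.Perm (Fin n)) : ℕ :=
  (Finset.univ.filter (fun i : Fin n => σ i < i ∧ i < σ⁻¹ i)).card

theorem f_bijection_preserves_crs (n : ℕ)
    (F : Equiv.Perm (Fin n) → Equiv.Perm (Fin (n + 1)))
    (hF : ∀ (σ : Equiv.Perm (Fin n)) (i : Fin n), F σ i.castSucc = (σ⁻¹ i).succ)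
    (hF' : ∀ σ : Equiv.Perm (Fin n), F σ (Fin.last n) = 0) :
    Set.BijOn F Set.univ {τ : Equiv.Perm (Fin (n + 1)) | τ (Fin.last n) = 0} ∧
      ∀ σ : Equiv.Perm (Fin n), crs (F σ) = crs σ := by

  constructor
  · refine ⟨fun σ _ => hF' σ, ?_, ?_⟩
    · intro σ _ σ' _ h
      have key : ∀ i : Fin n, σ⁻¹ i = σ'⁻¹ i := by
        intro i
        have h2 := congrArg (fun τ : Equiv.Perm (Fin (n+1)) => τ i.castSucc) h
        simp only [hF] at h2
        exact Fin.succ_injective _ h2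
      have h2 : σ⁻¹ = σ'⁻¹ := Equiv.ext key
      have := congrArg Equiv.symm h2
      simpa [Equiv.Perm.inv_def] using this
    · intro τ hτ
      simp only [Set.mem_setOf_eq] at hτ
      have hne : ∀ i : Fin n, τ i.castSucc ≠ 0 := by
        intro i h0
        exact (Fin.castSucc_lt_last i).ne (τ.injective (h0.trans hτ.symm))
      let g : Fin n → Fin n := fun i => (τ i.castSucc).pred (hne i)
      have hg : Function.Injective g := by
        intro a b hab
        have h2 : (τ a.castSucc) = (τ b.castSucc) := by
          have := congrArg Fin.succ hab
          simpa [g, Fin.succ_pred] using this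
        exact Fin.castSucc_injective n (τ.injective h2)
      let e := Equiv.ofBijective g (Finite.injective_iff_bijective.mp hg)
      refine ⟨e.symm, Set.mem_univ _, ?_⟩
      apply Equiv.ext
      intro x
      refine Fin.lastCases ?_ ?_ x
      · rw [hF', hτ]
      · intro i
        rw [hF]
        have h3 : (e.symm)⁻¹ i = g i := rfl
        rw [h3]
        simp [g, Fin.succ_pred]
  · intro σ
    symm
    unfold crs
    have key : ∀ a : Fin n, F σ (σ a).castSucc = a.succ := by
      intro a; rw [hF]; simp
    refine Finset.card_bij (fun p _ => ((σ p.1).castSucc, (σ p.2).castSucc)) ?_ ?_ ?_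
    · intro p hp
      simp only [Finset.mem_filter, Finset.mem_univ, true_and] at hp ⊢
      unfold isCrossing at hp ⊢
      rw [key p.1, key p.2]
      rcases hp with ⟨u1, u2, u3⟩ | ⟨u1, u2, u3⟩
      · right
        exact ⟨Fin.succ_lt_succ_iff.mpr u1, Fin.succ_le_castSucc_iff.mpr u2,
          Fin.castSucc_lt_castSucc_iff.mpr u3⟩
      · left
        exact ⟨Fin.castSucc_lt_castSucc_iff.mpr u1, Fin.castSucc_lt_succ_iff.mpr u2,
          Fin.succ_lt_succ_iff.mpr u3⟩
    · intro p _ q _ hpq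
      have h1 := congrArg Prod.fst hpq
      have h2 := congrArg Prod.snd hpq
      simp only at h1 h2
      have := σ.injective (Fin.castSucc_injective n h1)
      have := σ.injective (Fin.castSucc_injective n h2)
      exact Prod.ext ‹p.1 = q.1› ‹p.2 = q.2›
    · intro q hq
      simp only [Finset.mem_filter, Finset.mem_univ, true_and] at hq
      have hq2 : q.2 ≠ Fin.last n := by
        intro hlast
        rcases hq with ⟨_, u2, _⟩ | ⟨u1, _, _⟩
        · rw [hlast] at u2
          exact absurd u2 (Fin.le_last _).not_gt
        · rw [hlast, hF'] at u1
          exact absurd u1 (Fin.zero_le _).not_gt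
      have hq1 : q.1 ≠ Fin.last n := by
        intro hlast
        rcases hq with ⟨u1, _, _⟩ | ⟨_, _, u3⟩ <;>
          · rw [hlast] at *
            exact absurd (by assumption : Fin.last n < q.2) (Fin.le_last _).not_gt
      obtain ⟨i, hi⟩ := Fin.exists_castSucc_eq.mpr hq1
      obtain ⟨j, hj⟩ := Fin.exists_castSucc_eq.mpr hq2
      refine ⟨(σ⁻¹ i, σ⁻¹ j), ?_, ?_⟩
      · simp only [Finset.mem_filter, Finset.mem_univ, true_and]
        unfold isCrossing at hq ⊢
        rw [← hi, ← hj, hF, hF] at hq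
        simp only [Equiv.apply_symm_apply, Equiv.Perm.coe_inv]
        rcases hq with ⟨u1, u2, u3⟩ | ⟨u1, u2, u3⟩
        · right
          exact ⟨Fin.castSucc_lt_castSucc_iff.mp u1, Fin.castSucc_lt_succ_iff.mp u2,
            Fin.succ_lt_succ_iff.mp u3⟩
        · left
          exact ⟨Fin.succ_lt_succ_iff.mp u1, Fin.succ_le_castSucc_iff.mp u2,
            Fin.castSucc_lt_castSucc_iff.mp u3⟩
      · simp only [Equiv.Perm.coe_inv, Equiv.apply_symm_apply, hi, hj]
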